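/- arXiv:2301.07544 — 2 statements merged into one kernel-verified Lean document; each statement's English description precedes it below -/
import Mathlib

section
/- For an infinite path π through a finite cyclic tree with Inf(π) = Occ(π), the set of nodes lying between some companion and its bud that are infinitely visited, C[η] where η = Occ(π) ∩ dom(β), contains Inf(π): every infinitely visited node s admits a bud t ∈ η with β(t) ≤ s ≤ t. -/
/-- A cyclic tree: a finite prefix-closed set of nodes `T ⊆ ω*` together with a
partial map `β` from leaves of `T` to inner nodes with `β(t) < t` in the prefix order. -/
structure CyclicTree where
  T : Finset (List ℕ)
  root_mem : ([] : List ℕ) ∈ T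
  prefix_closed : ∀ ⦃s t : List ℕ⦄, t ∈ T → s <+: t → s ∈ T
  β : List ℕ → Option (List ℕ)
  β_spec : ∀ t c : List ℕ, β t = some c →
    t ∈ T ∧ c ∈ T ∧ c <+: t ∧ c ≠ t ∧
    (∀ i : ℕ, t ++ [i] ∉ T) ∧ (∃ i : ℕ, c ++ [i] ∈ T)

/-- One step of a path through a cyclic tree: either to a child, or from a bud to
its companion. -/
def CyclicTree.Step (C : CyclicTree) (s t : List ℕ) : Prop :=
  (t ∈ C.T ∧ ∃ i : ℕ, t = s ++ [i]) ∨ C.β s = some t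

/-- An infinite path through a cyclic tree. -/
def CyclicTree.IsPath (C : CyclicTree) (π : ℕ → List ℕ) : Prop :=
  (∀ i, π i ∈ C.T) ∧ ∀ i, C.Step (π i) (π (i + 1))

/-- `Inf(π)`: nodes visited infinitely often by `π`. -/
def PathInf (π : ℕ → List ℕ) : Set (List ℕ) := {s | ∀ N, ∃ i ≥ N, π i = s}

/-- `Occ(π)`: nodes visited at least once by `π`. -/
def PathOcc (π : ℕ → List ℕ) : Set (List ℕ) := {s | ∃ i, π i = s}

private lemma key (C : CyclicTree) (π : ℕ → List ℕ) (hπ : C.IsPath π) (s : List ℕ) :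
    ∀ n m, s <+: π m → s ≠ π m → π (m + n) = s →
    ∃ t ∈ PathOcc π, ∃ c : List ℕ, C.β t = some c ∧ c <+: s ∧ s <+: t := by
  intro n
  induction n with
  | zero =>
    intro m hpre hne heq
    exact absurd heq.symm hne
  | succ n ih =>
    intro m hpre hne heq
    rcases hπ.2 m with ⟨_, i, hi⟩ | hβ
    · have hpre' : s <+: π (m + 1) := hi ▸ hpre.trans (List.prefix_append _ _)
      have hne' : s ≠ π (m + 1) := by
        intro h
        have := congrArg List.length (h.trans hi)
        have hl := hpre.length_le
        simp [List.length_append] at this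
        omega
      have : π ((m + 1) + n) = s := by
        rw [show (m + 1) + n = m + (n + 1) by omega]; exact heq
      exact ih (m + 1) hpre' hne' this
    · obtain ⟨_, _, hcp, _, _, _⟩ := C.β_spec _ _ hβ
      rcases List.prefix_or_prefix_of_prefix hcp hpre with h | h
      · exact ⟨π m, ⟨m, rfl⟩, π (m + 1), hβ, h, hpre⟩
      · by_cases hcs : s = π (m + 1)
        · exact ⟨π m, ⟨m, rfl⟩, π (m + 1), hβ, hcs ▸ List.prefix_rfl, hpre⟩
        · have : π ((m + 1) + n) = s := by
            rw [show (m + 1) + n = m + (n + 1) by omega]; exact heq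
          exact ih (m + 1) h hcs this

/-- for an infinite path `π` through a finite cyclic tree with
`Inf(π) = Occ(π)`, letting `η = Occ(π) ∩ dom(β)`, every infinitely visited node
`s` admits a bud `t ∈ η` with `β(t) ≤ s ≤ t` in the prefix order. -/
theorem stmt7 (C : CyclicTree) (π : ℕ → List ℕ) (hπ : C.IsPath π)
    (hOI : PathOcc π = PathInf π) :
    ∀ s ∈ PathInf π, ∃ t ∈ PathOcc π, ∃ c : List ℕ,
      C.β t = some c ∧ c <+: s ∧ s <+: t := by

  intro s hs
  obtain ⟨i, -, hi⟩ := hs 0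
  rcases hπ.2 i with ⟨_, a, ha⟩ | hβ
  · have hpre : s <+: π (i + 1) := by
      rw [ha, hi]; exact List.prefix_append _ _
    have hne : s ≠ π (i + 1) := by
      intro h
      have := congrArg List.length (h.trans ha)
      simp [List.length_append, hi] at this
    obtain ⟨j, hj, hjs⟩ := hs (i + 1)
    have : π ((i + 1) + (j - (i + 1))) = s := by
      rw [Nat.add_sub_cancel' hj]; exact hjs
    exact key C π hπ s (j - (i + 1)) (i + 1) hpre hne this
  · obtain ⟨_, _, hcp, _, _, _⟩ := C.β_spec _ _ hβ
    exact ⟨π i, ⟨i, rfl⟩, π (i + 1), hβ, hi ▸ hcp, hi ▸ List.prefix_rfl⟩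
end

section
/- Resetting covered chips in descending order is always legal: if γ_1 < ... < γ_k are exactly the covered chips of a Safra board, then performing γ_k-reset, then γ_{k-1}-reset, ..., then γ_1-reset, each chip γ_{k-i} is still covered at the time its reset is performed. -/
/-- The γ-reset of a stack `S`: keep only the chips `≤ γ` if `γ ∈ S`, otherwise
leave `S` unchanged. -/
def sreset {Θ : Type*} [LinearOrder Θ] [DecidableEq Θ] (S : Finset Θ) (γ : Θ) :
    Finset Θ :=
  if γ ∈ S then S.filter (· ≤ γ) else S

/-- A chip `δ` is covered in a board `σ` if it is the top (maximum) of no stack: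
whenever `δ` occurs in a stack, some strictly larger chip also occurs in it. -/
def CoveredIn {Θ X A : Type*} [LinearOrder Θ]
    (σ : X → A → Finset (Finset Θ)) (δ : Θ) : Prop :=
  ∀ (x : X) (a : A) (S : Finset Θ), S ∈ σ x a → δ ∈ S → ∃ z ∈ S, δ < z

/-- The γ-reset of a board: replace every stack `S` by `sreset S γ`. -/
def resetBoard {Θ X A : Type*} [LinearOrder Θ] [DecidableEq Θ]
    (σ : X → A → Finset (Finset Θ)) (γ : Θ) : X → A → Finset (Finset Θ) :=
  fun x a => (σ x a).image (fun S => sreset S γ)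

/-- The boards resulting from successively resetting `d 0`, then `d 1`, …. -/
def boards {Θ X A : Type*} [LinearOrder Θ] [DecidableEq Θ]
    (σ : X → A → Finset (Finset Θ)) (d : ℕ → Θ) : ℕ → X → A → Finset (Finset Θ)
  | 0 => σ
  | i + 1 => resetBoard (boards σ d i) (d i)


theorem covered_reset {Θ X A : Type*} [LinearOrder Θ] [DecidableEq Θ]
    (σ : X → A → Finset (Finset Θ)) (γ δ : Θ) (h : δ < γ)
    (hc : CoveredIn σ δ) : CoveredIn (resetBoard σ γ) δ := by
  intro x a S' hS' hδ
  simp only [resetBoard, Finset.mem_image] at hS'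
  obtain ⟨S, hS, rfl⟩ := hS'
  unfold sreset at hδ ⊢
  by_cases hγ : γ ∈ S
  · simp only [hγ, if_true] at hδ ⊢
    exact ⟨γ, Finset.mem_filter.2 ⟨hγ, le_refl γ⟩, h⟩
  · simp only [hγ, if_false] at hδ ⊢
    exact hc x a S hS hδ

/-- resetting covered chips in descending order is always legal:
if `d 0 > d 1 > ⋯ > d (k-1)` enumerates exactly the covered chips of a Safra board
`σ` in descending order, then performing the `d 0`-reset, then the `d 1`-reset, …,
each chip `d i` is still covered on the board at the time its reset is performed. -/
theorem stmt10 {Θ X A : Type*} [LinearOrder Θ] [DecidableEq Θ]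
    (σ : X → A → Finset (Finset Θ)) (k : ℕ) (d : ℕ → Θ)
    (hdesc : ∀ i j : ℕ, i < j → j < k → d j < d i)
    (hcov : ∀ i < k, CoveredIn σ (d i))
    (hmem : ∀ i < k, ∃ (x : X) (a : A) (S : Finset Θ), S ∈ σ x a ∧ d i ∈ S)
    (hexact : ∀ δ : Θ, CoveredIn σ δ →
      (∃ (x : X) (a : A) (S : Finset Θ), S ∈ σ x a ∧ δ ∈ S) → ∃ i < k, d i = δ) :
    ∀ i < k, CoveredIn (boards σ d i) (d i) := by
  intro i hik
  have key : ∀ j ≤ i, CoveredIn (boards σ d j) (d i) := by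
    intro j hj
    induction j with
    | zero => exact hcov i hik
    | succ n ih =>
      exact covered_reset _ _ _ (hdesc n i (Nat.lt_of_succ_le hj) hik)
        (ih (Nat.le_of_succ_le hj))
  exact key i le_rfl
end
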